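/- In the XY-model, for every even k ≥ 2 the sum over all maps ι : {1,…,k} → {1,…,n−1} of the number of (ε,ι)-noncrossing pair partitions satisfies Σ_ι #NC₂^{(ε,ι)}(k) ≤ M_k. -/

import Mathlib

set_option linter.unusedSectionVars false
set_option linter.deprecated false

open Finset Equiv

namespace LRH

variable {n m : ℕ}

/-- The ε-matrix determined by the interaction sets `K`. -/
def eps (K : Fin m → Finset (Fin n)) (i j : Fin m) : ℕ :=
  if K i ∩ K j = ∅ then 1 else 0

section Partitions

variable {β : Type*} [LinearOrder β]

/-- A partition (equivalence relation) is (ε,ι)-noncrossing. -/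
def EpsNC (K : Fin m → Finset (Fin n)) (ι : β → Fin m) (α : Setoid β) : Prop :=
  ∀ i p j q : β, i < p → p < j → j < q →
    α i j → α p q → ¬ α i p → eps K (ι i) (ι p) = 1

/-- Noncrossing partition of a linearly ordered set. -/
def IsNoncrossing (α : Setoid β) : Prop :=
  ∀ i p j q : β, i < p → p < j → j < q →
    α i j → α p q → ¬ α i p → False

/-- Pair partition: every class has exactly two elements. -/
def IsPairPartition (α : Setoid β) : Prop :=
  ∀ i : β, {j | α i j}.ncard = 2

/-- The set `NC^{(ε,ι)}`. -/
def NCSet (K : Fin m → Finset (Fin n)) (ι : β → Fin m) : Set (Setoid β) :=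
  {α | α ≤ Setoid.ker ι ∧ EpsNC K ι α}

/-- The set `NC₂^{(ε,ι)}` of (ε,ι)-noncrossing pair partitions. -/
def NC2Set (K : Fin m → Finset (Fin n)) (ι : β → Fin m) : Set (Setoid β) :=
  {α | IsPairPartition α ∧ α ≤ Setoid.ker ι ∧ EpsNC K ι α}

/-- Restriction of a partition to a subset (as a partition of the subtype). -/
def restrictSetoid (α : Setoid β) (p : β → Prop) : Setoid {x // p x} :=
  Setoid.comap Subtype.val α

end Partitions

section Perms

variable {β : Type*} [LinearOrder β] [Fintype β]

/-- The full cycle on a finite subset `J`, in increasing order, fixing the complement. -/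
def fullCycleOn (J : Finset β) : Equiv.Perm β :=
  (J.sort (· ≤ ·)).formPerm

/-- Number of cycles of a permutation, counting fixed points. -/
def numCycles (σ : Equiv.Perm β) : ℕ :=
  σ.cycleType.card + (Fintype.card β - σ.support.card)

/-- `|σ|`, the minimal number of transpositions needed to write σ; equals
`card − numCycles`. -/
def permNorm (σ : Equiv.Perm β) : ℕ :=
  σ.support.card - σ.cycleType.card

/-- The permutation induced on `J` (extended by the identity off `J`), when `σ`
preserves `J`; junk value `1` otherwise. -/
def permRestrict (σ : Equiv.Perm β) (J : Finset β) : Equiv.Perm β :=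
  if h : ∀ x : β, x ∈ J ↔ σ x ∈ J then Equiv.Perm.ofSubtype (σ.subtypePerm (fun x => (h x).symm)) else 1

/-- `σ` restricted to `J` is noncrossing, i.e. lies on the geodesic `1 - σ_J - γ_J`. -/
def NCOn (σ : Equiv.Perm β) (J : Finset β) : Prop :=
  permNorm (permRestrict σ J) + permNorm ((permRestrict σ J)⁻¹ * fullCycleOn J) = J.card - 1

/-- `σ_J` and `τ_J` lie on a common geodesic `1 - σ_J - τ_J - γ_J`. -/
def geodesic3 (σ τ : Equiv.Perm β) (J : Finset β) : Prop :=
  permNorm (permRestrict σ J) + permNorm ((permRestrict σ J)⁻¹ * permRestrict τ J)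
    + permNorm ((permRestrict τ J)⁻¹ * fullCycleOn J) = J.card - 1

end Perms

variable {k : ℕ}

/-- `J_s = {j : s ∈ K_{ι_j}}`. -/
def Jset (K : Fin m → Finset (Fin n)) (ι : Fin k → Fin m) (s : Fin n) : Finset (Fin k) :=
  Finset.univ.filter (fun j => s ∈ K (ι j))

/-- The set `S_NC^{(ε,ι)}(γ_k)` of (ε,ι)-noncrossing permutations. -/
def SNCSet (K : Fin m → Finset (Fin n)) (ι : Fin k → Fin m) : Set (Equiv.Perm (Fin k)) :=
  {σ | (∀ j, ι (σ j) = ι j) ∧ ∀ s : Fin n, NCOn σ (Jset K ι s)}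

/-- The relation `σ ≤ τ` on `S_NC^{(ε,ι)}(γ_k)`. -/
def geoLe (K : Fin m → Finset (Fin n)) (ι : Fin k → Fin m) (σ τ : Equiv.Perm (Fin k)) : Prop :=
  ∀ s : Fin n, geodesic3 σ τ (Jset K ι s)

/-- The interaction sets of the XY-model: `K ι = {ι, ι+1}`. -/
def KXY (n : ℕ) : Fin (n - 1) → Finset (Fin n) := fun i =>
  {⟨i.val, Nat.lt_of_lt_of_le i.isLt (Nat.sub_le n 1)⟩,
   ⟨i.val + 1, by have := i.isLt; omega⟩}

section PMap

variable {β : Type*} [LinearOrder β] [Fintype β]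

/-- The equivalence class of `i` as a finset. -/
noncomputable def classFinset (α : Setoid β) (i : β) : Finset β :=
  letI := Classical.decPred (α i)
  Finset.univ.filter (α i)

lemma mem_classFinset {α : Setoid β} {i j : β} : j ∈ classFinset α i ↔ α i j := by
  classical
  simp [classFinset]

lemma self_mem_classFinset (α : Setoid β) (i : β) : i ∈ classFinset α i :=
  mem_classFinset.mpr (α.refl i)

lemma classFinset_eq_of_rel {α : Setoid β} {i j : β} (h : α i j) :
    classFinset α i = classFinset α j := by
  ext x
  simp only [mem_classFinset]
  exact ⟨fun hx => α.trans (α.symm h) hx, fun hx => α.trans h hx⟩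

/-- The map `P` from partitions to permutations: each class, listed increasingly,
becomes a cycle. -/
noncomputable def partitionToPerm (α : Setoid β) : Equiv.Perm β :=
  Equiv.ofBijective (fun i => ((classFinset α i).sort (· ≤ ·)).formPerm i) (by
    rw [← Finite.injective_iff_bijective]
    intro a b hab
    dsimp only at hab
    have ha : ((classFinset α a).sort (· ≤ ·)).formPerm a ∈ (classFinset α a).sort (· ≤ ·) :=
      List.formPerm_apply_mem_of_mem ((Finset.mem_sort _).mpr (self_mem_classFinset α a))
    have hb : ((classFinset α b).sort (· ≤ ·)).formPerm b ∈ (classFinset α b).sort (· ≤ ·) :=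
      List.formPerm_apply_mem_of_mem ((Finset.mem_sort _).mpr (self_mem_classFinset α b))
    have ha' : α a (((classFinset α a).sort (· ≤ ·)).formPerm a) :=
      mem_classFinset.mp ((Finset.mem_sort _).mp ha)
    have hb' : α b (((classFinset α b).sort (· ≤ ·)).formPerm b) :=
      mem_classFinset.mp ((Finset.mem_sort _).mp hb)
    have hrel : α a b := by
      refine α.iseqv.trans ha' ?_
      rw [hab]
      exact α.iseqv.symm hb'
    have hcc : classFinset α a = classFinset α b := classFinset_eq_of_rel hrel
    rw [hcc] at hab
    exact ((classFinset α b).sort (· ≤ ·)).formPerm.injective hab)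

end PMap

instance setoidFinite {X : Type*} [Finite X] : Finite (Setoid X) :=
  Finite.of_injective (fun s : Setoid X => s.r) fun a b h => by
    cases a; cases b; dsimp at h; subst h; rfl

section Mobius

/-- The Möbius function of a finite poset, determined by `μ(x,x) = 1` and
`∑_{x ≤ z ≤ y} μ(z,y) = 0` for `x < y`. -/
noncomputable def mobius {P : Type*} [PartialOrder P] [Fintype P] (a b : P) : ℤ :=
  letI := Classical.dec
  if a = b then 1
  else if a ≤ b then
    - ∑ z ∈ (Finset.univ.filter (fun z => a < z ∧ z ≤ b)).attach,
        mobius (z : P) b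
  else 0
termination_by letI := Classical.dec; (Finset.univ.filter (fun z : P => a < z ∧ z ≤ b)).card
decreasing_by
  classical
  have hz := z.2
  simp only [Finset.mem_filter, Finset.mem_univ, true_and] at hz
  apply Finset.card_lt_card
  rw [Finset.ssubset_iff_of_subset]
  · exact ⟨z, by simp [hz.1, hz.2], by simp⟩
  · intro w hw
    simp only [Finset.mem_filter, Finset.mem_univ, true_and] at hw ⊢
    exact ⟨lt_trans hz.1 hw.1, hw.2⟩

end Mobius

section Restrict

variable {n m k : ℕ}

lemma restrictSetoid_isNoncrossing {K : Fin m → Finset (Fin n)}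
    (hK : ∀ i, (K i).Nonempty) {ι : Fin k → Fin m} {α : Setoid (Fin k)}
    (hα : α ∈ NCSet K ι) (v : Fin m) :
    IsNoncrossing (restrictSetoid α (fun j => ι j = v)) := by
  rintro ⟨i, hi⟩ ⟨p, hp⟩ ⟨j, hj⟩ ⟨q, hq⟩ hip hpj hjq hij hpq hnip
  have h1 : i < p := hip
  have h2 : p < j := hpj
  have h3 : j < q := hjq
  have hij' : α i j := hij
  have hpq' : α p q := hpq
  have hnip' : ¬ α i p := hnip
  have := hα.2 i p j q h1 h2 h3 hij' hpq' hnip'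
  rw [hi, hp] at this
  unfold eps at this
  rw [Finset.inter_self] at this
  rcases hK v with ⟨x, hx⟩
  simp only [(Finset.nonempty_iff_ne_empty.mp ⟨x, hx⟩), if_false] at this
  exact absurd this (by simp [Finset.nonempty_iff_ne_empty.mp ⟨x, hx⟩])

end Restrict

end LRH

namespace LRH

/-- The combinatorial bound `M_k` for the XY-model:
`M_k = 2^k · Σ_{ℓ₁+⋯+ℓ_{n−3} ≤ k} k!/(ℓ₁!⋯ℓ_{n−3}!(k−Σℓ)!) · 2^{(k−Σℓ)/2}`. -/
noncomputable def Mk (n k : ℕ) : ℝ :=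
  2 ^ k *
    ∑ ℓ ∈ (Fintype.piFinset fun _ : Fin (n - 3) => Finset.range (k + 1)).filter
        (fun ℓ => ∑ i, ℓ i ≤ k),
      (Nat.factorial k : ℝ) /
          ((∏ i, (Nat.factorial (ℓ i) : ℝ)) * (Nat.factorial (k - ∑ i, ℓ i) : ℝ)) *
        (2 : ℝ) ^ (((k - ∑ i, ℓ i : ℕ) : ℝ) / 2)

end LRH


namespace LRH
section AuxProof
open Finset
variable {n k : ℕ}

open scoped Classical in
noncomputable def pt (α : Setoid (Fin k)) (i : Fin k) : Fin k :=
  if h : ∃ j, j ≠ i ∧ α i j then h.choose else i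

lemma class_pair {α : Setoid (Fin k)} (hα : IsPairPartition α) (i : Fin k) :
    ∃ j, j ≠ i ∧ {x | α i x} = {i, j} := by
  obtain ⟨a, b, hab, hs⟩ := Set.ncard_eq_two.mp (hα i)
  have hi : i ∈ {x | α i x} := α.refl i
  rw [hs] at hi
  simp only [Set.mem_insert_iff, Set.mem_singleton_iff] at hi
  rcases hi with rfl | rfl
  · exact ⟨b, Ne.symm hab, hs⟩
  · exact ⟨a, hab, by rw [hs, Set.pair_comm]⟩

lemma pt_rel {α : Setoid (Fin k)} (hα : IsPairPartition α) (i : Fin k) :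
    α i (pt α i) ∧ pt α i ≠ i := by
  obtain ⟨j, hji, hs⟩ := class_pair hα i
  have hj : α i j := by
    have : j ∈ {x | α i x} := by rw [hs]; exact Set.mem_insert_of_mem _ rfl
    exact this
  have hex : ∃ j', j' ≠ i ∧ α i j' := ⟨j, hji, hj⟩
  rw [pt]
  rw [dif_pos hex]
  exact ⟨hex.choose_spec.2, hex.choose_spec.1⟩

lemma rel_iff_pt {α : Setoid (Fin k)} (hα : IsPairPartition α) (i x : Fin k) :
    α i x ↔ x = i ∨ x = pt α i := by
  obtain ⟨j, hji, hs⟩ := class_pair hα i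
  have hptj : pt α i = j := by
    have h1 : pt α i ∈ {x | α i x} := (pt_rel hα i).1
    rw [hs] at h1
    simp only [Set.mem_insert_iff, Set.mem_singleton_iff] at h1
    rcases h1 with h1 | h1
    · exact absurd h1 (pt_rel hα i).2
    · exact h1
  constructor
  · intro h
    have hx : x ∈ {y | α i y} := h
    rw [hs] at hx
    simp only [Set.mem_insert_iff, Set.mem_singleton_iff] at hx
    rcases hx with rfl | rfl
    · exact Or.inl rfl
    · exact Or.inr hptj.symm
  · intro h
    rcases h with h | h
    · rw [h]
    · rw [h]; exact (pt_rel hα i).1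

lemma pt_invol {α : Setoid (Fin k)} (hα : IsPairPartition α) (i : Fin k) :
    pt α (pt α i) = i := by
  have h2 : α (pt α i) i := α.symm (pt_rel hα i).1
  rcases (rel_iff_pt hα (pt α i) i).mp h2 with h3 | h3
  · exact absurd h3.symm (pt_rel hα i).2
  · exact h3.symm

lemma forced {S : Finset (Fin k)} {f : Fin k → Fin k}
    (hfS : ∀ x ∈ S, f x ∈ S) (hff : ∀ x ∈ S, f (f x) = x)
    (hfne : ∀ x ∈ S, f x ≠ x)
    (hfnc : ∀ i p, i ∈ S → p ∈ S → i < p → p < f i → f i < f p → False)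
    {j0 : Fin k} (hj0S : j0 ∈ S) (hj0c : f j0 < j0)
    (hmin : ∀ j ∈ S, f j < j → j0 ≤ j) :
    ∀ q ∈ S, q < j0 → q ≤ f j0 := by
  intro q hq hqj
  by_contra hlt
  push_neg at hlt
  have hqo : q < f q := by
    rcases lt_trichotomy q (f q) with h | h | h
    · exact h
    · exact absurd h.symm (hfne q hq)
    · exact absurd (hmin q hq h) (not_le.mpr hqj)
  have hfq : ¬ f q < j0 := by
    intro h
    have h1 : f (f q) < f q := by rw [hff q hq]; exact hqo
    exact absurd (hmin (f q) (hfS q hq) h1) (not_le.mpr h)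
  have hne : f q ≠ j0 := by
    intro h
    have : q = f j0 := by rw [← h, hff q hq]
    exact absurd (this ▸ hlt) (lt_irrefl _)
  have hj0fq : j0 < f q := lt_of_le_of_ne (not_lt.mp hfq) (Ne.symm hne)
  exact hfnc (f j0) q (hfS j0 hj0S) hq hlt (by rw [hff j0 hj0S]; exact hqj)
    (by rw [hff j0 hj0S]; exact hj0fq)

lemma nc_unique (S : Finset (Fin k)) : ∀ f g : Fin k → Fin k,
    (∀ x ∈ S, f x ∈ S) → (∀ x ∈ S, f (f x) = x) → (∀ x ∈ S, f x ≠ x) →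
    (∀ i p, i ∈ S → p ∈ S → i < p → p < f i → f i < f p → False) →
    (∀ x ∈ S, g x ∈ S) → (∀ x ∈ S, g (g x) = x) → (∀ x ∈ S, g x ≠ x) →
    (∀ i p, i ∈ S → p ∈ S → i < p → p < g i → g i < g p → False) →
    (∀ x ∈ S, (x < f x ↔ x < g x)) →
    ∀ x ∈ S, f x = g x := by
  induction S using Finset.strongInduction with
  | _ S ih =>
  intro f g hfS hff hfne hfnc hgS hgg hgne hgnc hop x hx
  have hSne : S.Nonempty := ⟨x, hx⟩
  have hyS := S.max'_mem hSne
  have hyc : f (S.max' hSne) < S.max' hSne :=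
    lt_of_le_of_ne (S.le_max' _ (hfS _ hyS)) (hfne _ hyS)
  have hclos : ∀ j ∈ S, (f j < j ↔ g j < j) := by
    intro j hj
    constructor <;> intro h
    · rcases lt_trichotomy (g j) j with h1 | h1 | h1
      · exact h1
      · exact absurd h1 (hgne j hj)
      · exact absurd ((hop j hj).mpr h1) (not_lt.mpr h.le)
    · rcases lt_trichotomy (f j) j with h1 | h1 | h1
      · exact h1
      · exact absurd h1 (hfne j hj)
      · exact absurd ((hop j hj).mp h1) (not_lt.mpr h.le)
  set C := S.filter (fun j => f j < j) with hC
  have hCne : C.Nonempty := ⟨S.max' hSne, Finset.mem_filter.mpr ⟨hyS, hyc⟩⟩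
  set j0 := C.min' hCne with hj0
  have hj0m := C.min'_mem hCne
  have hj0S : j0 ∈ S := (Finset.mem_filter.mp hj0m).1
  have hj0c : f j0 < j0 := (Finset.mem_filter.mp hj0m).2
  have hminf : ∀ j ∈ S, f j < j → j0 ≤ j := fun j hj hc =>
    C.min'_le j (Finset.mem_filter.mpr ⟨hj, hc⟩)
  have hming : ∀ j ∈ S, g j < j → j0 ≤ j := fun j hj hc =>
    hminf j hj ((hclos j hj).mpr hc)
  have hgj0c : g j0 < j0 := (hclos j0 hj0S).mp hj0c
  have hfmax := forced hfS hff hfne hfnc hj0S hj0c hminf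
  have hgmax := forced hgS hgg hgne hgnc hj0S hgj0c hming
  have hp : f j0 = g j0 :=
    le_antisymm (hgmax (f j0) (hfS _ hj0S) hj0c) (hfmax (g j0) (hgS _ hj0S) hgj0c)
  have hpS : f j0 ∈ S := hfS _ hj0S
  have hfp : f (f j0) = j0 := hff j0 hj0S
  have hgp : g (f j0) = j0 := by rw [hp]; exact hgg j0 hj0S
  set S' := (S.erase j0).erase (f j0) with hS'
  have hmem' : ∀ z, z ∈ S' ↔ z ∈ S ∧ z ≠ j0 ∧ z ≠ f j0 := by
    intro z
    simp only [hS', Finset.mem_erase]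
    tauto
  have hsub : S' ⊂ S := by
    refine Finset.ssubset_iff_of_subset (fun z hz => ((hmem' z).mp hz).1) |>.mpr ?_
    exact ⟨j0, hj0S, fun h => ((hmem' j0).mp h).2.1 rfl⟩
  have hfS' : ∀ z ∈ S', f z ∈ S' := by
    intro z hz
    obtain ⟨hzS, hzj0, hzp⟩ := (hmem' z).mp hz
    refine (hmem' (f z)).mpr ⟨hfS z hzS, ?_, ?_⟩
    · intro h; exact hzp (by rw [← hff z hzS, h])
    · intro h; exact hzj0 (by rw [← hff z hzS, h, hfp])
  have hgS' : ∀ z ∈ S', g z ∈ S' := by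
    intro z hz
    obtain ⟨hzS, hzj0, hzp⟩ := (hmem' z).mp hz
    refine (hmem' (g z)).mpr ⟨hgS z hzS, ?_, ?_⟩
    · intro h; exact hzp (by rw [← hgg z hzS, h]; exact hp.symm)
    · intro h; exact hzj0 (by rw [← hgg z hzS, h, hgp])
  have key := ih S' hsub f g
    (hfS') (fun z hz => hff z ((hmem' z).mp hz).1) (fun z hz => hfne z ((hmem' z).mp hz).1)
    (fun i p' hi hp' => hfnc i p' ((hmem' i).mp hi).1 ((hmem' p').mp hp').1)
    (hgS') (fun z hz => hgg z ((hmem' z).mp hz).1) (fun z hz => hgne z ((hmem' z).mp hz).1)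
    (fun i p' hi hp' => hgnc i p' ((hmem' i).mp hi).1 ((hmem' p').mp hp').1)
    (fun z hz => hop z ((hmem' z).mp hz).1)
  by_cases hxj0 : x = j0
  · rw [hxj0]; exact hp
  · by_cases hxp : x = f j0
    · rw [hxp, hfp, hgp]
    · exact key x ((hmem' x).mpr ⟨hx, hxj0, hxp⟩)


/-- merged label -/
def mval (hn : 3 ≤ n) (v : Fin (n-1)) : Fin (n-2) :=
  ⟨if v.val ≤ 1 then 0 else v.val - 1, by have := v.isLt; split <;> omega⟩

lemma kxy_inter_nonempty (hn : 3 ≤ n) {v w : Fin (n-1)} (h : mval hn v = mval hn w) :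
    KXY n v ∩ KXY n w ≠ ∅ := by
  have hval : v.val = w.val ∨ (v.val ≤ 1 ∧ w.val ≤ 1) := by
    simp only [mval, Fin.mk.injEq] at h
    split at h <;> split at h <;> omega
  have hv := v.isLt; have hw := w.isLt
  apply Finset.Nonempty.ne_empty
  rcases hval with h1 | h1
  · refine ⟨⟨v.val, by omega⟩, ?_⟩
    simp only [KXY, Finset.mem_inter, Finset.mem_insert, Finset.mem_singleton, Fin.ext_iff,
      Fin.val_mk]
    exact ⟨Or.inl trivial, Or.inl h1⟩
  · refine ⟨⟨1, by omega⟩, ?_⟩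
    simp only [KXY, Finset.mem_inter, Finset.mem_insert, Finset.mem_singleton, Fin.ext_iff,
      Fin.val_mk]
    omega

lemma pt_ker {ι : Fin k → Fin (n-1)} {α : Setoid (Fin k)}
    (hmem : α ∈ NC2Set (KXY n) ι) (j : Fin k) : ι (pt α j) = ι j := by
  have h := Setoid.le_def.mp hmem.2.1 (pt_rel hmem.1 j).1
  exact (Setoid.ker_def.mp h).symm

lemma pt_class_nc (hn : 3 ≤ n) {ι : Fin k → Fin (n-1)} {α : Setoid (Fin k)}
    (hmem : α ∈ NC2Set (KXY n) ι) :
    ∀ i p, mval hn (ι i) = mval hn (ι p) → i < p → p < pt α i → pt α i < pt α p → False := by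
  intro i p hc hip hpfi hfifp
  have hnotrel : ¬ α i p := by
    intro hr
    rcases (rel_iff_pt hmem.1 i p).mp hr with h | h
    · exact absurd h (ne_of_gt hip)
    · exact absurd h (ne_of_lt hpfi)
  have heps := hmem.2.2 i p (pt α i) (pt α p) hip hpfi hfifp
    (pt_rel hmem.1 i).1 (pt_rel hmem.1 p).1 hnotrel
  have hempty : KXY n (ι i) ∩ KXY n (ι p) = ∅ := by
    by_contra hne
    simp only [eps, if_neg hne] at heps
    exact absurd heps (by norm_num)
  exact kxy_inter_nonempty hn hc hempty

lemma opener_count {α : Setoid (Fin k)} (hα : IsPairPartition α) (S : Finset (Fin k))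
    (hS : ∀ j ∈ S, pt α j ∈ S) :
    (S.filter fun j => j < pt α j).card * 2 = S.card := by
  classical
  have hneg : S.filter (fun j => ¬ j < pt α j) = S.filter (fun j => pt α j < j) := by
    apply Finset.filter_congr
    intro j _
    simp only [not_lt]
    constructor
    · intro h; exact lt_of_le_of_ne h (pt_rel hα j).2
    · exact le_of_lt
  have hbij : (S.filter fun j => j < pt α j).card = (S.filter fun j => pt α j < j).card := by
    apply Finset.card_bij' (fun j _ => pt α j) (fun j _ => pt α j)
    · intro a ha
      have h1 := Finset.mem_filter.mp ha
      refine Finset.mem_filter.mpr ⟨hS a h1.1, ?_⟩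
      rw [pt_invol hα]
      exact h1.2
    · intro a ha
      have h1 := Finset.mem_filter.mp ha
      refine Finset.mem_filter.mpr ⟨hS a h1.1, ?_⟩
      rw [pt_invol hα]
      exact h1.2
    · intro a _; exact pt_invol hα a
    · intro a _; exact pt_invol hα a
  have htot : (S.filter fun j => j < pt α j).card + (S.filter fun j => ¬ j < pt α j).card
      = S.card := Finset.card_filter_add_card_filter_not (p := fun j => j < pt α j)
  rw [hneg] at htot
  omega

lemma pow_half_le (r : ℕ) : (2:ℝ) ^ (r / 2) ≤ Real.sqrt 2 ^ r := by
  have h2 : Real.sqrt 2 ^ 2 = 2 := Real.sq_sqrt (by norm_num)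
  have h1 : (1:ℝ) ≤ Real.sqrt 2 := by nlinarith [Real.sqrt_nonneg 2]
  calc (2:ℝ) ^ (r / 2) = (Real.sqrt 2 ^ 2) ^ (r / 2) := by rw [h2]
    _ = Real.sqrt 2 ^ (2 * (r / 2)) := by rw [pow_mul]
    _ ≤ Real.sqrt 2 ^ r := pow_le_pow_right₀ h1 (by omega)

lemma countc (hn : 3 ≤ n) (c : Fin k → Fin (n-2)) :
    ∑ ι ∈ univ.filter (fun ι : Fin k → Fin (n-1) => (fun j => mval hn (ι j)) = c),
      (NC2Set (KXY n) ι).ncard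
      ≤ 2 ^ k * 2 ^ ((univ.filter fun j : Fin k => (c j).val = 0).card / 2) := by
  classical
  set R : Finset (Fin k) := univ.filter (fun j => (c j).val = 0) with hR
  set A : Finset ((Fin k → Bool) × (Fin k → Bool)) :=
    univ.filter (fun wb =>
      (∀ j, wb.2 j = true → ((c j).val = 0 ∧ wb.1 j = true)) ∧
      (univ.filter fun j => (c j).val = 0 ∧ wb.1 j = true).card * 2 = R.card) with hA
  -- Step 1: card bound for A
  have hAcard : A.card ≤ 2 ^ k * 2 ^ (R.card / 2) := by
    rw [Finset.card_eq_sum_card_fiberwise (f := Prod.fst) (t := univ) (fun _ _ => mem_univ _)]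
    have hstep : ∀ w : Fin k → Bool, (A.filter fun wb => wb.1 = w).card ≤ 2 ^ (R.card / 2) := by
      intro w
      rcases (A.filter fun wb => wb.1 = w).eq_empty_or_nonempty with he | hne
      · rw [he]; simp
      · obtain ⟨wb0, hwb0⟩ := hne
        have h0 := Finset.mem_filter.mp hwb0
        have hcond := (Finset.mem_filter.mp h0.1).2
        have hw : wb0.1 = w := h0.2
        have hTcard : (univ.filter fun j => (c j).val = 0 ∧ w j = true).card = R.card / 2 := by
          have h2 := hcond.2
          rw [hw] at h2
          omega
        calc (A.filter fun wb => wb.1 = w).card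
            ≤ ((univ.filter fun j => (c j).val = 0 ∧ w j = true).powerset).card := by
              apply Finset.card_le_card_of_injOn (fun wb => univ.filter fun j => wb.2 j = true)
              · intro wb hwb
                have h1 := Finset.mem_filter.mp hwb
                have h2 := (Finset.mem_filter.mp h1.1).2
                rw [Finset.mem_coe, Finset.mem_powerset]
                intro j hj
                have hbj := (Finset.mem_filter.mp hj).2
                have h3 := h2.1 j hbj
                rw [h1.2] at h3
                exact Finset.mem_filter.mpr ⟨mem_univ _, h3⟩
              · intro a ha b hb hab
                have ha1 := (Finset.mem_filter.mp ha).2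
                have hb1 := (Finset.mem_filter.mp hb).2
                apply Prod.ext
                · rw [ha1, hb1]
                · funext j
                  have hj := Finset.ext_iff.mp hab j
                  simp only [Finset.mem_filter, Finset.mem_univ, true_and] at hj
                  cases haj : a.2 j <;> cases hbj : b.2 j
                  · rfl
                  · exact absurd (hj.mpr hbj) (by rw [haj]; simp)
                  · exact absurd (hj.mp haj) (by rw [hbj]; simp)
                  · rfl
            _ = 2 ^ (R.card / 2) := by rw [Finset.card_powerset, hTcard]
    calc ∑ w : Fin k → Bool, (A.filter fun wb => wb.1 = w).card
        ≤ ∑ _w : Fin k → Bool, 2 ^ (R.card / 2) := Finset.sum_le_sum fun w _ => hstep w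
      _ = 2 ^ k * 2 ^ (R.card / 2) := by
          rw [Finset.sum_const, Finset.card_univ, smul_eq_mul]
          congr 1
          simp [Fintype.card_fun]
  -- Step 2: the sum is at most A.card
  letI : Fintype (Setoid (Fin k)) := Fintype.ofFinite _
  have hsum : ∑ ι ∈ univ.filter (fun ι : Fin k → Fin (n-1) => (fun j => mval hn (ι j)) = c),
        (NC2Set (KXY n) ι).ncard
      = ((univ.filter (fun ι : Fin k → Fin (n-1) => (fun j => mval hn (ι j)) = c)).sigma
          (fun ι => (NC2Set (KXY n) ι).toFinset)).card := by
    rw [Finset.card_sigma]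
    exact Finset.sum_congr rfl fun ι _ => (Set.ncard_eq_toFinset_card' _)
  rw [hsum]
  refine le_trans (Finset.card_le_card_of_injOn
    (fun x => ((fun j => decide (j < pt x.2 j)),
               (fun j => decide ((c j).val = 0 ∧ j < pt x.2 j ∧ (x.1 j).val = 1)))) ?_ ?_) hAcard
  · -- maps to A
    rintro ⟨ι, α⟩ hx
    rw [Finset.mem_coe, Finset.mem_sigma] at hx
    obtain ⟨hι, hα⟩ := hx
    have hιc : (fun j => mval hn (ι j)) = c := (Finset.mem_filter.mp hι).2
    have hmem : α ∈ NC2Set (KXY n) ι := Set.mem_toFinset.mp hα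
    have hpair := hmem.1
    refine Finset.mem_filter.mpr ⟨mem_univ _, ?_, ?_⟩
    · intro j hj
      simp only [decide_eq_true_eq] at hj ⊢
      exact ⟨hj.1, hj.2.1⟩
    · have hfilter : (univ.filter fun j => (c j).val = 0 ∧ decide (j < pt α j) = true)
          = R.filter (fun j => j < pt α j) := by
        rw [hR, Finset.filter_filter]
        apply Finset.filter_congr
        intro j _
        simp
      rw [hfilter]
      apply opener_count hpair
      intro j hj
      rw [hR, Finset.mem_filter] at hj ⊢
      refine ⟨mem_univ _, ?_⟩
      have : c (pt α j) = c j := by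
        rw [← hιc]
        simp only
        rw [pt_ker hmem]
      rw [this]
      exact hj.2
  · -- injectivity
    rintro ⟨ι, α⟩ hx ⟨ι', α'⟩ hy heq
    rw [Finset.mem_coe, Finset.mem_sigma] at hx hy
    obtain ⟨hι, hα⟩ := hx
    obtain ⟨hι', hα'⟩ := hy
    have hιc : (fun j => mval hn (ι j)) = c := (Finset.mem_filter.mp hι).2
    have hιc' : (fun j => mval hn (ι' j)) = c := (Finset.mem_filter.mp hι').2
    have hmem : α ∈ NC2Set (KXY n) ι := Set.mem_toFinset.mp hα
    have hmem' : α' ∈ NC2Set (KXY n) ι' := Set.mem_toFinset.mp hα'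
    have hmval : ∀ j, mval hn (ι j) = c j := fun j => congrFun hιc j
    have hmval' : ∀ j, mval hn (ι' j) = c j := fun j => congrFun hιc' j
    have hw := congrArg Prod.fst heq
    have hb := congrArg Prod.snd heq
    simp only at hw hb
    have hop : ∀ j, j < pt α j ↔ j < pt α' j := by
      intro j
      have := congrFun hw j
      simpa [decide_eq_decide] using this
    -- pt α = pt α'
    have hfeq : ∀ x, pt α x = pt α' x := by
      intro x0
      have hcl : ∀ (αx : Setoid (Fin k)) (ιx : Fin k → Fin (n-1)),
          αx ∈ NC2Set (KXY n) ιx → (∀ j, mval hn (ιx j) = c j) →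
          (∀ z ∈ univ.filter (fun j => c j = c x0), pt αx z ∈ univ.filter (fun j => c j = c x0))
          := by
        intro αx ιx hm hmv z hz
        rw [Finset.mem_filter] at hz ⊢
        refine ⟨mem_univ _, ?_⟩
        rw [← hmv (pt αx z), pt_ker hm, hmv z]
        exact hz.2
      have hnc : ∀ (αx : Setoid (Fin k)) (ιx : Fin k → Fin (n-1)),
          αx ∈ NC2Set (KXY n) ιx → (∀ j, mval hn (ιx j) = c j) →
          (∀ i p, i ∈ univ.filter (fun j => c j = c x0) → p ∈ univ.filter (fun j => c j = c x0)
            → i < p → p < pt αx i → pt αx i < pt αx p → False) := by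
        intro αx ιx hm hmv i p hi hp
        apply pt_class_nc hn hm
        rw [hmv i, hmv p, (Finset.mem_filter.mp hi).2, (Finset.mem_filter.mp hp).2]
      exact nc_unique (univ.filter (fun j => c j = c x0)) (pt α) (pt α')
        (hcl α ι hmem hmval) (fun z _ => pt_invol hmem.1 z) (fun z _ => (pt_rel hmem.1 z).2)
        (hnc α ι hmem hmval)
        (hcl α' ι' hmem' hmval') (fun z _ => pt_invol hmem'.1 z) (fun z _ => (pt_rel hmem'.1 z).2)
        (hnc α' ι' hmem' hmval')
        (fun z _ => hop z)
        x0 (Finset.mem_filter.mpr ⟨mem_univ _, rfl⟩)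
    have hαα : α = α' := by
      apply Setoid.ext
      intro a b
      rw [rel_iff_pt hmem.1, rel_iff_pt hmem'.1, hfeq a]
    -- recover ι
    have hval1 : ∀ j, (c j).val = 0 → (ι j).val ≤ 1 := by
      intro j h0
      have hthis := hmval j
      simp only [mval, Fin.ext_iff, Fin.val_mk] at hthis
      rw [h0] at hthis
      by_cases hle : (ι j).val ≤ 1
      · exact hle
      · rw [if_neg hle] at hthis; clear * - hthis hle; omega
    have hval1' : ∀ j, (c j).val = 0 → (ι' j).val ≤ 1 := by
      intro j h0
      have hthis := hmval' j
      simp only [mval, Fin.ext_iff, Fin.val_mk] at hthis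
      rw [h0] at hthis
      by_cases hle : (ι' j).val ≤ 1
      · exact hle
      · rw [if_neg hle] at hthis; clear * - hthis hle; omega
    have hopeneq : ∀ j, (c j).val = 0 → j < pt α j → ι j = ι' j := by
      intro j h0 hj
      have hbj := congrFun hb j
      rw [decide_eq_decide] at hbj
      have h1iff : (ι j).val = 1 ↔ (ι' j).val = 1 := by
        constructor
        · intro h
          exact (hbj.mp ⟨h0, hj, h⟩).2.2
        · intro h
          exact (hbj.mpr ⟨h0, by rw [← hfeq j]; exact hj, h⟩).2.2
      have hv := hval1 j h0
      have hv' := hval1' j h0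
      apply Fin.ext
      by_cases h : (ι j).val = 1
      · rw [h]; exact (h1iff.mp h).symm
      · have h' : ¬ (ι' j).val = 1 := fun hh => h (h1iff.mpr hh)
        clear * - hv hv' h h'
        omega
    have hiota : ι = ι' := by
      funext j
      by_cases h0 : (c j).val = 0
      · rcases lt_trichotomy j (pt α j) with hlt | heqq | hgt
        · exact hopeneq j h0 hlt
        · exact absurd heqq.symm (pt_rel hmem.1 j).2
        · have hc2 : (c (pt α j)).val = 0 := by
            rw [← hmval (pt α j), pt_ker hmem, hmval j]
            exact h0
          have h3 : pt α j < pt α (pt α j) := by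
            rw [pt_invol hmem.1]
            exact hgt
          have h4 := hopeneq (pt α j) hc2 h3
          calc ι j = ι (pt α j) := (pt_ker hmem j).symm
            _ = ι' (pt α j) := h4
            _ = ι' (pt α' j) := by rw [hfeq j]
            _ = ι' j := pt_ker hmem' j
      · have e1 := hmval j
        have e2 := hmval' j
        simp only [mval, Fin.ext_iff, Fin.val_mk] at e1 e2
        apply Fin.ext
        by_cases hle : (ι j).val ≤ 1 <;> by_cases hle' : (ι' j).val ≤ 1 <;>
          [rw [if_pos hle] at e1; rw [if_pos hle] at e1; rw [if_neg hle] at e1;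
           rw [if_neg hle] at e1] <;>
          [rw [if_pos hle'] at e2; rw [if_neg hle'] at e2; rw [if_pos hle'] at e2;
           rw [if_neg hle'] at e2] <;> (clear * - e1 e2 h0 hle hle'; omega)
    subst hiota
    rw [hαα]

lemma sqrt_pow_eq (r : ℕ) : Real.sqrt 2 ^ r = (2:ℝ) ^ ((r:ℝ)/2) := by
  rw [Real.sqrt_eq_rpow, ← Real.rpow_natCast ((2:ℝ) ^ ((1:ℝ)/2)) r,
    ← Real.rpow_mul (by norm_num : (0:ℝ) ≤ 2)]
  congr 1
  ring

lemma key_sum (N k : ℕ) :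
    ∑ ℓ ∈ (Fintype.piFinset fun _ : Fin N => Finset.range (k + 1)).filter
        (fun ℓ => ∑ i, ℓ i ≤ k),
      (Nat.factorial k : ℝ) /
          ((∏ i, (Nat.factorial (ℓ i) : ℝ)) * (Nat.factorial (k - ∑ i, ℓ i) : ℝ)) *
        (2 : ℝ) ^ (((k - ∑ i, ℓ i : ℕ) : ℝ) / 2)
    = (Real.sqrt 2 + N) ^ k := by
  classical
  have hmt := Finset.sum_pow_eq_sum_piAntidiag (univ : Finset (Fin (N+1)))
    (Fin.cons (Real.sqrt 2) (fun _ => (1:ℝ))) k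
  have hsum : ∑ v : Fin (N+1), (Fin.cons (Real.sqrt 2) (fun _ => (1:ℝ)) v)
      = Real.sqrt 2 + N := by
    rw [Fin.sum_univ_succ]
    simp
  rw [hsum] at hmt
  rw [hmt]
  symm
  apply Finset.sum_nbij' (i := fun d => fun i : Fin N => d i.succ)
    (j := fun ℓ => Fin.cons (k - ∑ i, ℓ i) ℓ)
  · -- hi : maps piAntidiag into filter
    intro d hd
    rw [Finset.mem_piAntidiag] at hd
    have hsumd : ∑ v : Fin (N+1), d v = k := hd.1
    rw [Fin.sum_univ_succ] at hsumd
    refine Finset.mem_filter.mpr ⟨Fintype.mem_piFinset.mpr fun i => ?_,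
      by show ∑ i : Fin N, d i.succ ≤ k; omega⟩
    rw [Finset.mem_range]
    have : d i.succ ≤ ∑ j : Fin N, d j.succ :=
      Finset.single_le_sum (f := fun j : Fin N => d j.succ) (fun _ _ => Nat.zero_le _) (mem_univ i)
    omega
  · -- hj : maps filter into piAntidiag
    intro ℓ hℓ
    have hle := (Finset.mem_filter.mp hℓ).2
    rw [Finset.mem_piAntidiag]
    constructor
    · rw [show ∑ v ∈ univ, Fin.cons (k - ∑ i, ℓ i) ℓ v = ∑ v : Fin (N+1), Fin.cons (k - ∑ i, ℓ i) ℓ v from rfl,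
        Fin.sum_univ_succ]
      simp only [Fin.cons_zero, Fin.cons_succ]
      omega
    · intro i _
      exact mem_univ i
  · -- left
    intro d hd
    rw [Finset.mem_piAntidiag] at hd
    have hsumd : ∑ v : Fin (N+1), d v = k := hd.1
    rw [Fin.sum_univ_succ] at hsumd
    funext v
    refine Fin.cases ?_ ?_ v
    · rw [Fin.cons_zero]
      show k - ∑ i : Fin N, d i.succ = d 0
      omega
    · intro i; rw [Fin.cons_succ]
  · -- right
    intro ℓ _
    funext i
    rw [Fin.cons_succ]
  · -- terms
    intro d hd
    rw [Finset.mem_piAntidiag] at hd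
    have hsumd : ∑ v : Fin (N+1), d v = k := hd.1
    have hsumd' := hsumd
    rw [Fin.sum_univ_succ] at hsumd'
    have hprod : ∏ v : Fin (N+1), (Fin.cons (Real.sqrt 2) (fun _ => (1:ℝ)) v) ^ d v
        = Real.sqrt 2 ^ d 0 := by
      rw [Fin.prod_univ_succ]
      simp
    have hd0 : d 0 = k - ∑ i : Fin N, d i.succ := by omega
    have hfact : (Nat.multinomial univ d : ℝ)
        = (Nat.factorial k : ℝ) /
          ((∏ i : Fin N, (Nat.factorial (d i.succ) : ℝ)) * (Nat.factorial (d 0) : ℝ)) := by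
      have hspec := Nat.multinomial_spec (univ : Finset (Fin (N+1))) d
      rw [show ∑ v ∈ univ, d v = k from hsumd] at hspec
      have hprodfact : ∏ v ∈ (univ : Finset (Fin (N+1))), Nat.factorial (d v)
          = Nat.factorial (d 0) * ∏ i : Fin N, Nat.factorial (d i.succ) := by
        rw [show (∏ v ∈ univ, Nat.factorial (d v)) = ∏ v : Fin (N+1), Nat.factorial (d v) from rfl,
          Fin.prod_univ_succ]
      rw [hprodfact] at hspec
      have hcast : ((Nat.factorial (d 0) * ∏ i : Fin N, Nat.factorial (d i.succ))
          * Nat.multinomial univ d : ℝ) = (Nat.factorial k : ℝ) := by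
        exact_mod_cast congrArg (Nat.cast (R := ℝ)) hspec
      push_cast at hcast
      rw [eq_div_iff (by positivity)]
      linear_combination hcast
    rw [hprod, hfact, hd0, sqrt_pow_eq]

lemma sum_sqrt_c (hn : 3 ≤ n) :
    ∑ c : Fin k → Fin (n-2),
        Real.sqrt 2 ^ (Finset.univ.filter fun j : Fin k => (c j).val = 0).card
      = (Real.sqrt 2 + ((n - 3 : ℕ) : ℝ)) ^ k := by
  have hwsum : ∑ v : Fin (n-2), (if v.val = 0 then Real.sqrt 2 else (1:ℝ))
      = Real.sqrt 2 + ((n - 3 : ℕ) : ℝ) := by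
    rw [Finset.sum_ite, Finset.sum_const, Finset.sum_const]
    have h1 : (Finset.univ.filter fun v : Fin (n-2) => v.val = 0).card = 1 := by
      rw [Finset.card_eq_one]
      refine ⟨⟨0, by omega⟩, ?_⟩
      ext v
      simp [Finset.mem_filter, Fin.ext_iff]
    have h2 : (Finset.univ.filter fun v : Fin (n-2) => ¬ v.val = 0).card = n - 3 := by
      have h3 : (Finset.univ.filter fun v : Fin (n-2) => v.val = 0).card
          + (Finset.univ.filter fun v : Fin (n-2) => ¬ v.val = 0).card
          = Fintype.card (Fin (n-2)) := by
        rw [← Finset.card_univ]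
        exact Finset.card_filter_add_card_filter_not (p := fun v : Fin (n-2) => v.val = 0)
      rw [Fintype.card_fin] at h3
      omega
    rw [h1, h2]
    simp
  have hprod_c : ∀ c : Fin k → Fin (n-2),
      (∏ j : Fin k, if (c j).val = 0 then Real.sqrt 2 else (1:ℝ))
      = Real.sqrt 2 ^ (Finset.univ.filter fun j => (c j).val = 0).card := by
    intro c
    rw [Finset.prod_ite, Finset.prod_const, Finset.prod_const, one_pow, mul_one]
  calc ∑ c : Fin k → Fin (n-2),
          Real.sqrt 2 ^ (Finset.univ.filter fun j : Fin k => (c j).val = 0).card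
        = ∑ c ∈ Fintype.piFinset (fun _ : Fin k => (Finset.univ : Finset (Fin (n-2)))),
            ∏ j : Fin k, (if (c j).val = 0 then Real.sqrt 2 else (1:ℝ)) := by
          rw [Fintype.piFinset_univ]
          exact Finset.sum_congr rfl fun c _ => (hprod_c c).symm
      _ = ∏ _j : Fin k, ∑ v : Fin (n-2), (if v.val = 0 then Real.sqrt 2 else (1:ℝ)) :=
          (Finset.prod_univ_sum (fun _ : Fin k => (Finset.univ : Finset (Fin (n-2))))
            (fun _ v => if v.val = 0 then Real.sqrt 2 else (1:ℝ))).symm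
      _ = (Real.sqrt 2 + ((n - 3 : ℕ) : ℝ)) ^ k := by
          rw [Finset.prod_const, hwsum, Finset.card_univ, Fintype.card_fin]


end AuxProof
end LRH

open LRH in
/-- XY-model: for every even `k ≥ 2`,
`Σ_ι #NC₂^{(ε,ι)}(k) ≤ M_k`. -/
theorem statement8 {n : ℕ} (hn : 3 ≤ n) (k : ℕ) (hk : 2 ≤ k) (hke : Even k) :
    ((∑ ι : Fin k → Fin (n - 1), (NC2Set (KXY n) ι).ncard : ℕ) : ℝ) ≤ Mk n k := by
  classical
  have hMk : Mk n k = 2 ^ k * (Real.sqrt 2 + ((n - 3 : ℕ) : ℝ)) ^ k := by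
    unfold Mk
    rw [key_sum]
  have hcsum := sum_sqrt_c hn (k := k)
  have hfib : ∑ c : Fin k → Fin (n-2), ∑ ι ∈ Finset.univ.filter
        (fun ι : Fin k → Fin (n-1) => (fun j => mval hn (ι j)) = c), (NC2Set (KXY n) ι).ncard
      = ∑ ι : Fin k → Fin (n-1), (NC2Set (KXY n) ι).ncard :=
    Finset.sum_fiberwise_of_maps_to (fun x _ => Finset.mem_univ _) _
  rw [← hfib]
  calc ((∑ c : Fin k → Fin (n-2), ∑ ι ∈ Finset.univ.filter
        (fun ι : Fin k → Fin (n-1) => (fun j => mval hn (ι j)) = c),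
        (NC2Set (KXY n) ι).ncard : ℕ) : ℝ)
      ≤ ∑ c : Fin k → Fin (n-2), (2:ℝ) ^ k
          * Real.sqrt 2 ^ (Finset.univ.filter fun j : Fin k => (c j).val = 0).card := by
        push_cast
        apply Finset.sum_le_sum
        intro c _
        have h1 := countc hn c
        calc ∑ ι ∈ Finset.univ.filter
              (fun ι : Fin k → Fin (n-1) => (fun j => mval hn (ι j)) = c),
              ((NC2Set (KXY n) ι).ncard : ℝ)
            = ((∑ ι ∈ Finset.univ.filter
              (fun ι : Fin k → Fin (n-1) => (fun j => mval hn (ι j)) = c),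
              (NC2Set (KXY n) ι).ncard : ℕ) : ℝ) := by push_cast; rfl
          _ ≤ ((2 ^ k * 2 ^ ((Finset.univ.filter
              fun j : Fin k => (c j).val = 0).card / 2) : ℕ) : ℝ) := Nat.cast_le.mpr h1
          _ ≤ (2:ℝ) ^ k * Real.sqrt 2
              ^ (Finset.univ.filter fun j : Fin k => (c j).val = 0).card := by
            push_cast
            exact mul_le_mul_of_nonneg_left (pow_half_le _) (by positivity)
    _ = 2 ^ k * ∑ c : Fin k → Fin (n-2),
          Real.sqrt 2 ^ (Finset.univ.filter fun j : Fin k => (c j).val = 0).card :=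
        (Finset.mul_sum _ _ _).symm
    _ = 2 ^ k * (Real.sqrt 2 + ((n - 3 : ℕ) : ℝ)) ^ k := by rw [hcsum]
    _ = Mk n k := hMk.symm
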